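/- For n ≥ 5, the biharmonic potential of the Gaussian admits the one-dimensional integral representation: (Γ(n/2)/(4π^{n/2}(n-2)(n-4))) ∫_{ℝ^n} e^{-|y|²}/|x-y|^{n-4} dy = (1/16) ∫_0^∞ e^{-|x|²/(1+t)} (1+t)^{-n/2} t dt. -/

import Mathlib

open Real MeasureTheory

open Set
open scoped RealInnerProductSpace

noncomputable section




lemma gauss_quad (n : ℕ) (x : EuclideanSpace ℝ (Fin n)) {s : ℝ} (hs : 0 < s) :
    ∫ y : EuclideanSpace ℝ (Fin n), Real.exp (-(‖y‖ ^ 2 + s * ‖x - y‖ ^ 2)) =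
      (π / (1 + s)) ^ ((n : ℝ) / 2) * Real.exp (-(s * ‖x‖ ^ 2 / (1 + s))) := by
  have h1s : (0:ℝ) < 1 + s := by linarith
  have hexp : ∀ y : EuclideanSpace ℝ (Fin n),
      -(‖y‖ ^ 2 + s * ‖x - y‖ ^ 2) = (-(1+s) * ‖y‖^2 + 2*s*⟪x, y⟫) + (-(s * ‖x‖^2)) := by
    intro y
    have := @norm_sub_sq_real (EuclideanSpace ℝ (Fin n)) _ _ x y
    rw [this]; ring
  have key : ∫ y : EuclideanSpace ℝ (Fin n), Real.exp (-(1+s) * ‖y‖^2 + 2*s*⟪x, y⟫) =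
      (π / (1 + s)) ^ ((n : ℝ) / 2) * Real.exp ((2*s)^2 * ‖x‖^2 / (4*(1+s))) := by
    have hb : (0:ℝ) < ((1:ℂ)+s).re := by simpa using h1s
    have h0 := GaussianFourier.integral_cexp_neg_mul_sq_norm_add (V := EuclideanSpace ℝ (Fin n))
      hb (2*s : ℂ) x
    rw [finrank_euclideanSpace_fin] at h0
    have hL : (∫ v : EuclideanSpace ℝ (Fin n),
          Complex.exp (-(1+(s:ℂ)) * (‖v‖:ℂ)^2 + (2*(s:ℂ)) * ((⟪x, v⟫ : ℝ) : ℂ)))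
        = ((∫ y : EuclideanSpace ℝ (Fin n), Real.exp (-(1+s) * ‖y‖^2 + 2*s*⟪x, y⟫) : ℝ) : ℂ) := by
      change _ = Complex.ofRealLI (∫ y : EuclideanSpace ℝ (Fin n),
        Real.exp (-(1+s) * ‖y‖^2 + 2*s*⟪x, y⟫))
      rw [← Complex.ofRealLI.integral_comp_comm]
      congr 1 with y
      change _ = ((Real.exp (-(1+s) * ‖y‖^2 + 2*s*⟪x, y⟫) : ℝ) : ℂ)
      rw [Complex.ofReal_exp]
      push_cast
      ring_nf
    have hbase : ((π:ℂ) / (1+(s:ℂ))) = ((π/(1+s) : ℝ) : ℂ) := by push_cast; ring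
    have hexp2 : ((n:ℂ)/2) = (((n:ℝ)/2 : ℝ) : ℂ) := by push_cast; ring
    have hR : ((π:ℂ) / (1+(s:ℂ))) ^ ((n:ℂ) / 2) * Complex.exp ((2*(s:ℂ))^2 * (‖x‖:ℂ)^2 / (4*(1+(s:ℂ))))
        = (((π / (1 + s)) ^ ((n : ℝ) / 2) * Real.exp ((2*s)^2 * ‖x‖^2 / (4*(1+s))) : ℝ) : ℂ) := by
      rw [hbase, hexp2, ← Complex.ofReal_cpow (by positivity), Complex.ofReal_mul,
        Complex.ofReal_exp]
      congr 1
      push_cast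
      ring
    rw [← Complex.ofReal_inj, ← hL, h0, hR]
  calc ∫ y : EuclideanSpace ℝ (Fin n), Real.exp (-(‖y‖ ^ 2 + s * ‖x - y‖ ^ 2))
      = ∫ y : EuclideanSpace ℝ (Fin n), Real.exp (-(1+s) * ‖y‖^2 + 2*s*⟪x, y⟫) * Real.exp (-(s * ‖x‖^2)) := by
        congr 1; ext y; rw [← Real.exp_add, ← hexp]
    _ = (∫ y : EuclideanSpace ℝ (Fin n), Real.exp (-(1+s) * ‖y‖^2 + 2*s*⟪x, y⟫)) * Real.exp (-(s * ‖x‖^2)) := by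
        rw [integral_mul_const]
    _ = (π / (1 + s)) ^ ((n : ℝ) / 2) * Real.exp (-(s * ‖x‖ ^ 2 / (1 + s))) := by
        rw [key, mul_assoc, ← Real.exp_add]
        congr 2
        field_simp
        ring



lemma gauss_quad_integrable (n : ℕ) (x : EuclideanSpace ℝ (Fin n)) {s : ℝ} (hs : 0 < s) :
    Integrable (fun y : EuclideanSpace ℝ (Fin n) =>
      Real.exp (-(‖y‖ ^ 2 + s * ‖x - y‖ ^ 2))) := by
  have h1s : (0:ℝ) < 1 + s := by linarith
  have hb : (0:ℝ) < ((1:ℂ)+s).re := by simpa using h1s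
  have hI := ((GaussianFourier.integrable_cexp_neg_mul_sq_norm_add
      (V := EuclideanSpace ℝ (Fin n)) hb (2*s : ℂ) x).norm).mul_const
      (Real.exp (-(s * ‖x‖^2)))
  refine hI.congr (Filter.Eventually.of_forall fun y => ?_)
  have hz : (-(1+(s:ℂ)) * (‖y‖:ℂ)^2 + (2*(s:ℂ)) * ((⟪x, y⟫ : ℝ) : ℂ))
      = (((-(1+s) * ‖y‖^2 + 2*s*⟪x, y⟫ : ℝ)) : ℂ) := by push_cast; ring
  dsimp only
  rw [hz, Complex.norm_exp, Complex.ofReal_re, ← Real.exp_add]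
  congr 1
  have := @norm_sub_sq_real (EuclideanSpace ℝ (Fin n)) _ _ x y
  rw [this]; ring



lemma subord (n : ℕ) (hn : 5 ≤ n) (x y : EuclideanSpace ℝ (Fin n)) (hy : y ≠ x) :
    Real.exp (-‖y‖ ^ 2) / ‖x - y‖ ^ ((n : ℝ) - 4) =
      (Real.Gamma (((n:ℝ) - 4)/2))⁻¹ *
        ∫ s in Ioi (0:ℝ), s ^ (((n:ℝ) - 4)/2 - 1) * Real.exp (-(‖y‖ ^ 2 + s * ‖x - y‖ ^ 2)) := by
  have hn5 : (5:ℝ) ≤ (n:ℝ) := by exact_mod_cast hn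
  set a : ℝ := ((n:ℝ) - 4)/2 with ha_def
  have ha : 0 < a := by simp only [ha_def]; linarith
  have hxy : (0:ℝ) < ‖x - y‖ := by
    rw [norm_pos_iff, sub_ne_zero]; exact fun h => hy h.symm
  have hc : (0:ℝ) < ‖x - y‖ ^ 2 := by positivity
  have h1 : ∫ s in Ioi (0:ℝ), s ^ (a - 1) * Real.exp (-(‖y‖ ^ 2 + s * ‖x - y‖ ^ 2))
      = Real.exp (-‖y‖ ^ 2) * ((1 / ‖x - y‖ ^ 2) ^ a * Real.Gamma a) := by
    rw [← Real.integral_rpow_mul_exp_neg_mul_Ioi ha hc, ← integral_const_mul]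
    refine setIntegral_congr_fun measurableSet_Ioi fun s hs => ?_
    rw [show -(‖y‖ ^ 2 + s * ‖x - y‖ ^ 2) = -‖y‖^2 + -(‖x - y‖ ^ 2 * s) by ring,
      Real.exp_add]
    ring
  rw [h1]
  have e1 : (1 / ‖x - y‖ ^ 2 : ℝ) = ‖x - y‖ ^ (-2 : ℝ) := by
    rw [Real.rpow_neg hxy.le, one_div,
      show ((2:ℝ)) = ((2:ℕ):ℝ) by norm_num, Real.rpow_natCast]
  have h2 : (1 / ‖x - y‖ ^ 2 : ℝ) ^ a = ‖x - y‖ ^ (-((n:ℝ) - 4)) := by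
    rw [e1, ← Real.rpow_mul hxy.le]
    congr 1
    simp only [ha_def]; ring
  rw [h2, Real.rpow_neg hxy.le, div_eq_mul_inv]
  have hG : Real.Gamma a ≠ 0 := (Real.Gamma_pos_of_pos ha).ne'
  field_simp



-- integrability of the outer integrand G
lemma G_integrable (n : ℕ) (hn : 5 ≤ n) (x : EuclideanSpace ℝ (Fin n)) :
    IntegrableOn (fun s : ℝ => s ^ (((n:ℝ) - 4)/2 - 1) *
      ((π / (1 + s)) ^ ((n : ℝ) / 2) * Real.exp (-(s * ‖x‖ ^ 2 / (1 + s))))) (Ioi 0) := by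
  have hn5 : (5:ℝ) ≤ (n:ℝ) := by exact_mod_cast hn
  set a : ℝ := ((n:ℝ) - 4)/2 with ha_def
  set b : ℝ := (n:ℝ)/2 with hb_def
  have ha : 0 < a := by simp only [ha_def]; linarith
  have hb2 : 2 ≤ b := by simp only [hb_def]; linarith
  set G : ℝ → ℝ := fun s => s ^ (a - 1) *
      ((π / (1 + s)) ^ b * Real.exp (-(s * ‖x‖ ^ 2 / (1 + s)))) with hG_def
  have hmeas : ∀ t : Set ℝ, AEStronglyMeasurable G (volume.restrict t) := by
    intro t
    refine (Measurable.aestronglyMeasurable ?_)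
    fun_prop
  have hGnonneg : ∀ s : ℝ, 0 < s → 0 ≤ G s := by
    intro s hs
    have h1s : (0:ℝ) < 1 + s := by linarith
    simp only [hG_def]
    positivity
  have part1 : IntegrableOn G (Ioc 0 1) := by
    have base : IntegrableOn (fun s : ℝ => π ^ b * s ^ (a - 1)) (Ioc 0 1) := by
      have h := intervalIntegral.intervalIntegrable_rpow' (a := 0) (b := 1) (r := a - 1)
        (by linarith)
      rw [intervalIntegrable_iff, uIoc_of_le zero_le_one] at h
      exact h.const_mul _
    refine Integrable.mono' base (hmeas _) ?_
    filter_upwards [ae_restrict_mem measurableSet_Ioc] with s hs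
    have hs0 : 0 < s := hs.1
    have h1s : (0:ℝ) < 1 + s := by linarith
    rw [Real.norm_of_nonneg (hGnonneg s hs0)]
    simp only [hG_def]
    have hd : (π / (1 + s)) ^ b ≤ π ^ b := by
      apply Real.rpow_le_rpow (by positivity) _ (by simp only [hb_def]; positivity)
      rw [div_le_iff₀ h1s]
      nlinarith [pi_pos]
    have he : Real.exp (-(s * ‖x‖ ^ 2 / (1 + s))) ≤ 1 := by
      rw [Real.exp_le_one_iff]
      have : 0 ≤ s * ‖x‖ ^ 2 / (1 + s) := by positivity
      linarith
    calc s ^ (a - 1) * ((π / (1 + s)) ^ b * Real.exp (-(s * ‖x‖ ^ 2 / (1 + s))))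
        ≤ s ^ (a - 1) * (π ^ b * 1) := by
          apply mul_le_mul_of_nonneg_left _ (by positivity)
          exact mul_le_mul hd he (Real.exp_nonneg _) (by positivity)
      _ = π ^ b * s ^ (a - 1) := by ring
  have part2 : IntegrableOn G (Ioi 1) := by
    have base : IntegrableOn (fun s : ℝ => π ^ b * s ^ (-3 : ℝ)) (Ioi 1) :=
      (integrableOn_Ioi_rpow_of_lt (by norm_num) one_pos).const_mul _
    refine Integrable.mono' base (hmeas _) ?_
    filter_upwards [ae_restrict_mem measurableSet_Ioi] with s hs
    have hs0 : (0:ℝ) < s := lt_trans one_pos hs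
    have h1s : (0:ℝ) < 1 + s := by linarith
    rw [Real.norm_of_nonneg (hGnonneg s hs0)]
    simp only [hG_def]
    have hd : (π / (1 + s)) ^ b ≤ (π / s) ^ b := by
      apply Real.rpow_le_rpow (by positivity) _ (by simp only [hb_def]; positivity)
      apply div_le_div_of_nonneg_left pi_pos.le hs0
      linarith
    have he : Real.exp (-(s * ‖x‖ ^ 2 / (1 + s))) ≤ 1 := by
      rw [Real.exp_le_one_iff]
      have : 0 ≤ s * ‖x‖ ^ 2 / (1 + s) := by positivity
      linarith
    have key : s ^ (a - 1) * (π / s) ^ b = π ^ b * s ^ (-3 : ℝ) := by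
      rw [Real.div_rpow pi_pos.le hs0.le, div_eq_mul_inv, ← Real.rpow_neg hs0.le,
        ← mul_assoc, mul_comm (s ^ (a-1)) _, mul_assoc, ← Real.rpow_add hs0,
        show (a - 1 + -b) = (-3 : ℝ) by simp only [ha_def, hb_def]; ring]
    calc s ^ (a - 1) * ((π / (1 + s)) ^ b * Real.exp (-(s * ‖x‖ ^ 2 / (1 + s))))
        ≤ s ^ (a - 1) * ((π / s) ^ b * 1) := by
          apply mul_le_mul_of_nonneg_left _ (by positivity)
          exact mul_le_mul hd he (Real.exp_nonneg _) (by positivity)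
      _ = π ^ b * s ^ (-3 : ℝ) := by rw [mul_one]; exact key
  have : IntegrableOn G (Ioc 0 1 ∪ Ioi 1) := part1.union part2
  rwa [Ioc_union_Ioi_eq_Ioi zero_le_one] at this



lemma subst_lemma (n : ℕ) (hn : 5 ≤ n) (x : EuclideanSpace ℝ (Fin n)) :
    ∫ s in Ioi (0:ℝ), s ^ (((n:ℝ) - 4)/2 - 1) *
        ((π / (1 + s)) ^ ((n : ℝ) / 2) * Real.exp (-(s * ‖x‖ ^ 2 / (1 + s))))
      = π ^ ((n:ℝ)/2) *
        ∫ t in Ioi (0:ℝ), Real.exp (-‖x‖ ^ 2 / (1 + t)) * (1 + t) ^ (-(n : ℝ) / 2) * t := by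
  have hn5 : (5:ℝ) ≤ (n:ℝ) := by exact_mod_cast hn
  set a : ℝ := ((n:ℝ) - 4)/2 with ha_def
  set b : ℝ := (n:ℝ)/2 with hb_def
  set G : ℝ → ℝ := fun s => s ^ (a - 1) *
      ((π / (1 + s)) ^ b * Real.exp (-(s * ‖x‖ ^ 2 / (1 + s)))) with hG_def
  rw [← integral_comp_rpow_Ioi G (p := -1) (by norm_num), ← integral_const_mul]
  refine setIntegral_congr_fun measurableSet_Ioi fun t ht => ?_
  have ht0 : (0:ℝ) < t := ht
  have h1t : (0:ℝ) < 1 + t := by linarith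
  have hinv : t ^ (-1 : ℝ) = t⁻¹ := by
    rw [Real.rpow_neg ht0.le, Real.rpow_one]
  have hA : (1 + t⁻¹ : ℝ) = (1 + t)/t := by field_simp; ring
  have hB : π / (1 + t⁻¹ : ℝ) = π * t / (1 + t) := by
    rw [hA]; field_simp
  have hC : (-(t⁻¹ * ‖x‖ ^ 2 / (1 + t⁻¹)) : ℝ) = -‖x‖ ^ 2 / (1 + t) := by
    rw [hA]; field_simp
  have hD : (t⁻¹ : ℝ) ^ (a - 1) = t ^ (1 - a) := by
    rw [← hinv, ← Real.rpow_mul ht0.le]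
    congr 1; ring
  have hE : (π * t / (1 + t) : ℝ) ^ b = π ^ b * t ^ b * (1 + t) ^ (-b) := by
    rw [Real.div_rpow (by positivity) h1t.le, Real.mul_rpow pi_pos.le ht0.le,
      Real.rpow_neg h1t.le, div_eq_mul_inv]
  have hT : t ^ ((-1:ℝ) - 1) * (t ^ (1 - a) * t ^ b) = t := by
    rw [← Real.rpow_add ht0, ← Real.rpow_add ht0,
      show ((-1:ℝ) - 1 + (1 - a + b)) = 1 by simp only [ha_def, hb_def]; ring, Real.rpow_one]
  show (|(-1:ℝ)| * t ^ ((-1:ℝ) - 1)) • G (t ^ (-1:ℝ)) = _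
  rw [hinv]
  simp only [hG_def, abs_neg, abs_one, one_mul, smul_eq_mul, hD, hB, hC, hE]
  rw [show (-b : ℝ) = -(n:ℝ)/2 by rw [hb_def]; ring]
  linear_combination (π ^ b * (1 + t) ^ (-(n:ℝ)/2) * Real.exp (-‖x‖ ^ 2 / (1 + t))) * hT


/-- For `n ≥ 5`, the biharmonic potential of the Gaussian admits the
one-dimensional integral representation
`(Γ(n/2)/(4π^{n/2}(n-2)(n-4))) ∫_{ℝⁿ} e^{-|y|²}/|x-y|^{n-4} dy
  = (1/16) ∫₀^∞ e^{-|x|²/(1+t)} (1+t)^{-n/2} t dt`. -/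
theorem biharmonic_gaussian_one_dim_repr (n : ℕ) (hn : 5 ≤ n)
    (x : EuclideanSpace ℝ (Fin n)) :
    (Real.Gamma ((n : ℝ) / 2) / (4 * Real.pi ^ ((n : ℝ) / 2) * ((n : ℝ) - 2) * ((n : ℝ) - 4))) *
      (∫ y : EuclideanSpace ℝ (Fin n),
        Real.exp (-‖y‖ ^ 2) / ‖x - y‖ ^ ((n : ℝ) - 4)) =
    (1 / 16) * ∫ t in Set.Ioi (0 : ℝ),
      Real.exp (-‖x‖ ^ 2 / (1 + t)) * (1 + t) ^ (-(n : ℝ) / 2) * t := by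
  have hn5 : (5:ℝ) ≤ (n:ℝ) := by exact_mod_cast hn
  set a : ℝ := ((n:ℝ) - 4)/2 with ha_def
  set b : ℝ := (n:ℝ)/2 with hb_def
  have ha : 0 < a := by simp only [ha_def]; linarith
  set F : ℝ → EuclideanSpace ℝ (Fin n) → ℝ := fun s y =>
    s ^ (a - 1) * Real.exp (-(‖y‖ ^ 2 + s * ‖x - y‖ ^ 2)) with hF_def
  -- integrability on the product space
  have hF : Integrable (Function.uncurry F) ((volume.restrict (Ioi 0)).prod volume) := by
    rw [integrable_prod_iff]
    · constructor
      · filter_upwards [ae_restrict_mem measurableSet_Ioi] with s hs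
        simp only [hF_def, Function.uncurry_apply_pair]
        exact (gauss_quad_integrable n x hs).const_mul _
      · refine (G_integrable n hn x).congr ?_
        filter_upwards [ae_restrict_mem measurableSet_Ioi] with s hs
        have hs0 : (0:ℝ) < s := hs
        rw [← gauss_quad n x hs0, ← integral_const_mul]
        refine (integral_congr_ae (Filter.Eventually.of_forall fun y => ?_)).symm
        rw [Function.uncurry_apply_pair, hF_def,
          Real.norm_of_nonneg (by positivity)]
    · apply Measurable.aestronglyMeasurable
      fun_prop
  have hswap := integral_integral_swap hF
  haveI : Nontrivial (EuclideanSpace ℝ (Fin n)) := by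
    have h0 : 0 < n := by omega
    refine ⟨⟨EuclideanSpace.single (⟨0, h0⟩ : Fin n) 1, 0, fun h => ?_⟩⟩
    have := congrFun (congrArg (fun v : EuclideanSpace ℝ (Fin n) => (v : Fin n → ℝ)) h) ⟨0, h0⟩
    simp at this
  have hae : ∀ᵐ (y : EuclideanSpace ℝ (Fin n)), y ≠ x := by
    have h0 : volume ({x} : Set (EuclideanSpace ℝ (Fin n))) = 0 := measure_singleton x
    rw [ae_iff]
    convert h0 using 2
    ext y; simp
  have hΓa : Real.Gamma a ≠ 0 := (Real.Gamma_pos_of_pos ha).ne'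
  have step1 : (∫ y : EuclideanSpace ℝ (Fin n),
      Real.exp (-‖y‖ ^ 2) / ‖x - y‖ ^ ((n : ℝ) - 4)) =
      (Real.Gamma a)⁻¹ * ∫ y : EuclideanSpace ℝ (Fin n), ∫ s in Ioi (0:ℝ), F s y := by
    rw [← integral_const_mul]
    refine integral_congr_ae ?_
    filter_upwards [hae] with y hy
    exact subord n hn x y hy
  have step2 : (∫ s in Ioi (0:ℝ), ∫ y : EuclideanSpace ℝ (Fin n), F s y)
      = ∫ s in Ioi (0:ℝ), s ^ (a - 1) *
          ((π / (1 + s)) ^ b * Real.exp (-(s * ‖x‖ ^ 2 / (1 + s)))) := by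
    refine setIntegral_congr_fun measurableSet_Ioi fun s hs => ?_
    have hs0 : (0:ℝ) < s := hs
    rw [hF_def]
    rw [integral_const_mul, gauss_quad n x hs0]
  rw [step1, ← hswap, step2, subst_lemma n hn x]
  have hΓ : Real.Gamma ((n:ℝ)/2) = (a+1) * a * Real.Gamma a := by
    rw [show (n:ℝ)/2 = (a + 1) + 1 by simp only [ha_def]; ring,
      Real.Gamma_add_one (by positivity), Real.Gamma_add_one ha.ne']
    ring
  rw [hΓ]
  have hπ : (0:ℝ) < π ^ b := by positivity
  have hn2 : (n:ℝ) - 2 ≠ 0 := by linarith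
  have hn4 : (n:ℝ) - 4 ≠ 0 := by linarith
  rw [show π ^ ((n:ℝ)/2) = π ^ b from rfl]
  set R := ∫ t in Set.Ioi (0 : ℝ),
      Real.exp (-‖x‖ ^ 2 / (1 + t)) * (1 + t) ^ (-(n : ℝ) / 2) * t
  rw [show ((a+1) * a * Real.Gamma a / (4 * π ^ b * ((n:ℝ) - 2) * ((n:ℝ) - 4))) *
      ((Real.Gamma a)⁻¹ * (π ^ b * R)) =
      ((a+1) * a / (4 * ((n:ℝ) - 2) * ((n:ℝ) - 4))) *
        ((Real.Gamma a * (Real.Gamma a)⁻¹) * ((π ^ b * (π ^ b)⁻¹) * R)) by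
    field_simp]
  rw [mul_inv_cancel₀ hΓa, mul_inv_cancel₀ hπ.ne']
  rw [show ((a+1) * a / (4 * ((n:ℝ) - 2) * ((n:ℝ) - 4))) = 1/16 by
    simp only [ha_def]; field_simp; ring]
  ring

end
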